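/- arXiv:2007.07515 — 6 statements merged into one kernel-verified Lean document; each statement's English description precedes it below -/
import Mathlib

section
/- The function C*_∞ : [0,1]^K → ℝ defined by C*_∞(y) = min_{α ∈ Δ(K)} ‖α ⊙ y‖_∞ is concave on [0,1]^K. -/
open scoped Classical

private lemma milne_pair (a b c d : ℝ) (ha : 0 ≤ a) (hb : 0 ≤ b) (hc : 0 ≤ c) (hd : 0 ≤ d) :
    a*b/(a+b) + c*d/(c+d) ≤ (a+c)*(b+d)/((a+c)+(b+d)) := by
  rcases eq_or_lt_of_le (add_nonneg ha hb) with h1 | h1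
  · have ha0 : a = 0 := by linarith
    have hb0 : b = 0 := by linarith
    simp [ha0, hb0]
  rcases eq_or_lt_of_le (add_nonneg hc hd) with h2 | h2
  · have hc0 : c = 0 := by linarith
    have hd0 : d = 0 := by linarith
    simp [hc0, hd0]
  have h3 : 0 < (a+c)+(b+d) := by linarith
  rw [div_add_div _ _ (ne_of_gt h1) (ne_of_gt h2), div_le_div_iff₀ (by positivity) h3]
  nlinarith [sq_nonneg (a*d - b*c), mul_nonneg (mul_nonneg ha hb) (mul_nonneg hc hd)]

private lemma milne_sum {ι : Type*} (s : Finset ι) (p q : ι → ℝ)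
    (hp : ∀ i ∈ s, 0 ≤ p i) (hq : ∀ i ∈ s, 0 ≤ q i) :
    ∑ i ∈ s, (p i * q i)/(p i + q i) ≤
      (∑ i ∈ s, p i) * (∑ i ∈ s, q i) / ((∑ i ∈ s, p i) + (∑ i ∈ s, q i)) := by
  induction s using Finset.cons_induction with
  | empty => simp
  | cons a s has ih =>
    simp only [Finset.sum_cons]
    have hp' : ∀ i ∈ s, 0 ≤ p i := fun i hi => hp i (Finset.mem_cons_of_mem hi)
    have hq' : ∀ i ∈ s, 0 ≤ q i := fun i hi => hq i (Finset.mem_cons_of_mem hi)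
    calc p a * q a / (p a + q a) + ∑ i ∈ s, (p i * q i)/(p i + q i)
        ≤ p a * q a / (p a + q a) +
          (∑ i ∈ s, p i) * (∑ i ∈ s, q i) / ((∑ i ∈ s, p i) + (∑ i ∈ s, q i)) :=
          add_le_add_right (ih hp' hq') _
      _ ≤ _ := milne_pair _ _ _ _ (hp a (Finset.mem_cons_self _ _))
            (hq a (Finset.mem_cons_self _ _))
            (Finset.sum_nonneg hp') (Finset.sum_nonneg hq')

/-- The explicit value of the inf: harmonic-type function. -/
noncomputable def gfun (K : ℕ) (y : Fin K → ℝ) : ℝ :=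
  if ∀ i, 0 < y i then (∑ i, (y i)⁻¹)⁻¹ else 0

private lemma gfun_nonneg (K : ℕ) (y : Fin K → ℝ) : 0 ≤ gfun K y := by
  unfold gfun
  split_ifs with h
  · have : 0 ≤ ∑ i, (y i)⁻¹ := Finset.sum_nonneg fun i _ => inv_nonneg.2 (h i).le
    positivity
  · exact le_refl _

private lemma gfun_mono (K : ℕ) (hK : 0 < K) (u v : Fin K → ℝ) (hv : ∀ i, 0 < v i)
    (huv : ∀ i, v i ≤ u i) : gfun K v ≤ gfun K u := by
  haveI : Nonempty (Fin K) := Fin.pos_iff_nonempty.mp hK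
  have hu : ∀ i, 0 < u i := fun i => lt_of_lt_of_le (hv i) (huv i)
  unfold gfun
  rw [if_pos hu, if_pos hv]
  have hsum : ∑ i, (u i)⁻¹ ≤ ∑ i, (v i)⁻¹ :=
    Finset.sum_le_sum fun i _ => inv_anti₀ (hv i) (huv i)
  have hpos : 0 < ∑ i, (u i)⁻¹ :=
    Finset.sum_pos (fun i _ => inv_pos.2 (hu i)) Finset.univ_nonempty
  exact inv_anti₀ hpos hsum

private lemma gfun_superadd (K : ℕ) (hK : 0 < K) (u v : Fin K → ℝ)
    (hu : ∀ i, 0 ≤ u i) (hv : ∀ i, 0 ≤ v i) :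
    gfun K u + gfun K v ≤ gfun K (u + v) := by
  haveI : Nonempty (Fin K) := Fin.pos_iff_nonempty.mp hK
  by_cases hup : ∀ i, 0 < u i
  · by_cases hvp : ∀ i, 0 < v i
    · -- both positive : Milne
      have huvp : ∀ i, 0 < u i + v i := fun i => by have := hup i; have := hvp i; linarith
      unfold gfun
      rw [if_pos hup, if_pos hvp, if_pos (by intro i; exact huvp i)]
      simp only [Pi.add_apply]
      set A := ∑ i, (u i)⁻¹ with hA
      set B := ∑ i, (v i)⁻¹ with hB
      have hApos : 0 < A := Finset.sum_pos (fun i _ => inv_pos.2 (hup i)) Finset.univ_nonempty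
      have hBpos : 0 < B := Finset.sum_pos (fun i _ => inv_pos.2 (hvp i)) Finset.univ_nonempty
      have hmil : ∑ i, (u i + v i)⁻¹ ≤ A * B / (A + B) := by
        have := milne_sum Finset.univ (fun i => (u i)⁻¹) (fun i => (v i)⁻¹)
          (fun i _ => inv_nonneg.2 (hup i).le) (fun i _ => inv_nonneg.2 (hvp i).le)
        calc ∑ i, (u i + v i)⁻¹ = ∑ i : Fin K, ((u i)⁻¹ * (v i)⁻¹)/((u i)⁻¹ + (v i)⁻¹) := by
              refine Finset.sum_congr rfl fun i _ => ?_
              have h1 : u i ≠ 0 := (hup i).ne'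
              have h2 : v i ≠ 0 := (hvp i).ne'
              field_simp
              rw [add_comm]
          _ ≤ A * B / (A + B) := this
      have hCpos : 0 < ∑ i, (u i + v i)⁻¹ :=
        Finset.sum_pos (fun i _ => inv_pos.2 (huvp i)) Finset.univ_nonempty
      have hstep : (A * B / (A + B))⁻¹ ≤ (∑ i, (u i + v i)⁻¹)⁻¹ :=
        inv_anti₀ hCpos hmil
      have heq : (A * B / (A + B))⁻¹ = A⁻¹ + B⁻¹ := by
        field_simp
        ring
      linarith [hstep, heq ▸ hstep]
    · -- gfun v = 0
      have h2 : gfun K v = 0 := by unfold gfun; rw [if_neg hvp]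
      rw [h2, add_zero]
      exact gfun_mono K hK (u + v) u hup (fun i => by have := hv i; simp [Pi.add_apply]; linarith)
  · have h1 : gfun K u = 0 := by unfold gfun; rw [if_neg hup]
    rw [h1, zero_add]
    by_cases hvp : ∀ i, 0 < v i
    · exact gfun_mono K hK (u + v) v hvp (fun i => by have := hu i; simp [Pi.add_apply]; linarith)
    · have h2 : gfun K v = 0 := by unfold gfun; rw [if_neg hvp]
      rw [h2]
      exact gfun_nonneg K _

private lemma gfun_smul (K : ℕ) (hK : 0 < K) (c : ℝ) (hc : 0 ≤ c) (y : Fin K → ℝ) :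
    gfun K (c • y) = c * gfun K y := by
  rcases eq_or_lt_of_le hc with rfl | hc
  · have h0 : ¬ ∀ i : Fin K, 0 < ((0:ℝ) • y) i := by
      intro h
      have := h ⟨0, hK⟩
      simp at this
    unfold gfun
    rw [if_neg h0, zero_mul]
  · unfold gfun
    have hiff : (∀ i, 0 < (c • y) i) ↔ (∀ i, 0 < y i) := by
      refine forall_congr' fun i => ?_
      simp only [Pi.smul_apply, smul_eq_mul]
      constructor
      · intro h
        by_contra hcon
        push_neg at hcon
        nlinarith
      · intro h
        exact mul_pos hc h
    by_cases h : ∀ i, 0 < y i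
    · rw [if_pos (hiff.mpr h), if_pos h]
      have : ∑ i, ((c • y) i)⁻¹ = c⁻¹ * ∑ i, (y i)⁻¹ := by
        rw [Finset.mul_sum]
        refine Finset.sum_congr rfl fun i _ => ?_
        simp [mul_inv, mul_comm]
      rw [this, mul_inv, inv_inv]
    · rw [if_neg (fun hh => h (hiff.mp hh)), if_neg h, mul_zero]

private lemma gfun_value (K : ℕ) (hK : 0 < K) (y : Fin K → ℝ) (hy : ∀ i, 0 ≤ y i) :
    sInf ((fun α : Fin K → ℝ => ⨆ i, |α i * y i|) '' stdSimplex ℝ (Fin K)) = gfun K y := by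
  haveI : Nonempty (Fin K) := Fin.pos_iff_nonempty.mp hK
  set S : Set ℝ := (fun α : Fin K → ℝ => ⨆ i, |α i * y i|) '' stdSimplex ℝ (Fin K) with hS
  have hlb0 : ∀ z ∈ S, (0:ℝ) ≤ z := by
    rintro z ⟨α, hα, rfl⟩
    show (0:ℝ) ≤ ⨆ i, |α i * y i|
    exact le_trans (abs_nonneg _)
      (le_ciSup (f := fun i => |α i * y i|) (Set.Finite.bddAbove (Set.finite_range _))
        (Classical.arbitrary (Fin K)))
  by_cases h : ∀ i, 0 < y i
  · -- all positive
    set T : ℝ := ∑ i, (y i)⁻¹ with hT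
    have hTpos : 0 < T :=
      Finset.sum_pos (fun i _ => inv_pos.2 (h i)) Finset.univ_nonempty
    have hmem : T⁻¹ ∈ S := by
      refine ⟨fun i => (y i)⁻¹ / T,
        ⟨fun i => div_nonneg (inv_nonneg.2 (h i).le) hTpos.le, ?_⟩, ?_⟩
      · rw [← Finset.sum_div, ← hT, div_self hTpos.ne']
      · show (⨆ i, |(y i)⁻¹ / T * y i|) = T⁻¹
        have hfun : (fun i => |(y i)⁻¹ / T * y i|) = fun _ : Fin K => T⁻¹ := by
          funext i
          rw [div_mul_eq_mul_div, inv_mul_cancel₀ (h i).ne', one_div,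
            abs_of_pos (inv_pos.2 hTpos)]
        simp only [hfun, ciSup_const]
    have hlb : ∀ z ∈ S, T⁻¹ ≤ z := by
      rintro z ⟨α, hα, rfl⟩
      show T⁻¹ ≤ ⨆ i, |α i * y i|
      set M := ⨆ i, |α i * y i| with hM
      have hMub : ∀ i, α i * y i ≤ M := fun i =>
        le_trans (le_abs_self _)
          (le_ciSup (f := fun i => |α i * y i|) (Set.Finite.bddAbove (Set.finite_range _)) i)
      have hone : (1:ℝ) ≤ M * T := by
        have : (1:ℝ) = ∑ i, α i := hα.2.symm
        rw [this, hT, Finset.mul_sum]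
        refine Finset.sum_le_sum fun i _ => ?_
        have hrw : α i = (α i * y i) * (y i)⁻¹ := by
          rw [mul_assoc, mul_inv_cancel₀ (h i).ne', mul_one]
        rw [hrw]
        exact mul_le_mul_of_nonneg_right (hMub i) (inv_nonneg.2 (h i).le)
      rw [inv_eq_one_div, div_le_iff₀ hTpos]
      linarith
    have : sInf S = T⁻¹ := le_antisymm (csInf_le ⟨0, hlb0⟩ hmem) (le_csInf ⟨_, hmem⟩ hlb)
    rw [this]
    unfold gfun
    rw [if_pos h]
  · -- some coordinate is zero
    push_neg at h
    obtain ⟨i, hi⟩ := h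
    have hyi : y i = 0 := le_antisymm hi (hy i)
    have hmem : (0:ℝ) ∈ S := by
      refine ⟨Pi.single i 1, single_mem_stdSimplex ℝ i, ?_⟩
      show (⨆ j, |(Pi.single i 1 : Fin K → ℝ) j * y j|) = 0
      have hfun : (fun j => |(Pi.single i 1 : Fin K → ℝ) j * y j|) = fun _ : Fin K => (0:ℝ) := by
        funext j
        by_cases hji : j = i
        · subst hji; rw [hyi, mul_zero, abs_zero]
        · rw [Pi.single_eq_of_ne hji, zero_mul, abs_zero]
      simp only [hfun, ciSup_const]
    have : sInf S = 0 := le_antisymm (csInf_le ⟨0, hlb0⟩ hmem) (le_csInf ⟨_, hmem⟩ hlb0)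
    rw [this]
    unfold gfun
    rw [if_neg (fun hh => absurd (hh i) (not_lt.2 hi))]

/-- `C*_∞(y) = min_{α ∈ Δ(K)} ‖α ⊙ y‖_∞` is concave on `[0,1]^K`. -/
theorem stmt_3 (K : ℕ) (hK : 0 < K) :
    ConcaveOn ℝ {y : Fin K → ℝ | ∀ i, y i ∈ Set.Icc (0:ℝ) 1}
      (fun y => sInf ((fun α : Fin K → ℝ => ⨆ i, |α i * y i|) '' stdSimplex ℝ (Fin K))) := by
  have hconv : Convex ℝ {y : Fin K → ℝ | ∀ i, y i ∈ Set.Icc (0:ℝ) 1} := by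
    have : {y : Fin K → ℝ | ∀ i, y i ∈ Set.Icc (0:ℝ) 1} =
        Set.pi Set.univ (fun _ : Fin K => Set.Icc (0:ℝ) 1) := by
      ext y; simp [Set.mem_pi, Set.mem_Icc, Pi.le_def, forall_and]
    rw [this]
    exact convex_pi fun i _ => convex_Icc 0 1
  have hg : ConcaveOn ℝ {y : Fin K → ℝ | ∀ i, y i ∈ Set.Icc (0:ℝ) 1} (gfun K) := by
    refine ⟨hconv, fun x hx y hy a b ha hb hab => ?_⟩
    calc a * gfun K x + b * gfun K y = gfun K (a • x) + gfun K (b • y) := by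
          rw [gfun_smul K hK a ha x, gfun_smul K hK b hb y]
      _ ≤ gfun K (a • x + b • y) :=
          gfun_superadd K hK _ _ (fun i => mul_nonneg ha (hx i).1)
            (fun i => mul_nonneg hb (hy i).1)
  refine ⟨hconv, fun x hx y hy a b ha hb hab => ?_⟩
  have hm : a • x + b • y ∈ {y : Fin K → ℝ | ∀ i, y i ∈ Set.Icc (0:ℝ) 1} :=
    hconv hx hy ha hb hab
  simp only
  rw [gfun_value K hK _ (fun i => (hx i).1), gfun_value K hK _ (fun i => (hy i).1),
    gfun_value K hK _ (fun i => (hm i).1)]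
  exact hg.2 hx hy ha hb hab
end

section
/- For each p ≥ 1, the function C*_p : [0,1]^K → ℝ defined by C*_p(y) = min_{α ∈ Δ(K)} ‖α ⊙ y‖_p is concave. -/
open Finset

/-- For each `p ≥ 1`, `C*_p(y) = min_{α ∈ Δ(K)} ‖α ⊙ y‖_p` is
concave on `[0,1]^K`, where `‖x‖_p = (∑_i |x_i|^p)^(1/p)`. -/
theorem stmt_4 (K : ℕ) (hK : 0 < K) (p : ℝ) (hp : 1 ≤ p) :
    ConcaveOn ℝ {y : Fin K → ℝ | ∀ i, y i ∈ Set.Icc (0:ℝ) 1}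
      (fun y => sInf ((fun α : Fin K → ℝ =>
        (∑ i, |α i * y i| ^ p) ^ (1 / p)) '' stdSimplex ℝ (Fin K))) := by
  have hp0 : (0:ℝ) < p := lt_of_lt_of_le one_pos hp
  have hp0' : p ≠ 0 := ne_of_gt hp0
  -- abbreviation
  set g : (Fin K → ℝ) → (Fin K → ℝ) → ℝ :=
    fun γ y => (∑ i, |γ i * y i| ^ p) ^ (1 / p) with hgdef
  have hgnonneg : ∀ γ y, 0 ≤ g γ y := by
    intro γ y
    apply Real.rpow_nonneg
    apply Finset.sum_nonneg
    intro i _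
    exact Real.rpow_nonneg (abs_nonneg _) _
  -- scaling
  have hscale : ∀ (c : ℝ), 0 ≤ c → ∀ d : Fin K → ℝ,
      (∑ i, |c * d i| ^ p) ^ (1/p) = c * (∑ i, |d i| ^ p) ^ (1/p) := by
    intro c hc d
    have h1 : ∀ i, |c * d i| ^ p = c ^ p * |d i| ^ p := by
      intro i
      rw [abs_mul, abs_of_nonneg hc, Real.mul_rpow hc (abs_nonneg _)]
    simp_rw [h1, ← Finset.mul_sum]
    rw [Real.mul_rpow (Real.rpow_nonneg hc _) (Finset.sum_nonneg fun i _ =>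
      Real.rpow_nonneg (abs_nonneg _) _), ← Real.rpow_mul hc]
    rw [mul_one_div, div_self hp0', Real.rpow_one]
  -- image nonempty and bdd below
  have hmem0 : (Pi.single (Fin.mk 0 hK) (1:ℝ)) ∈ stdSimplex ℝ (Fin K) :=
    single_mem_stdSimplex ℝ _
  have himgne : ∀ y : Fin K → ℝ,
      ((fun α : Fin K → ℝ => (∑ i, |α i * y i| ^ p) ^ (1 / p)) ''
        stdSimplex ℝ (Fin K)).Nonempty :=
    fun y => ⟨_, ⟨_, hmem0, rfl⟩⟩
  have hbdd : ∀ y : Fin K → ℝ,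
      BddBelow ((fun α : Fin K → ℝ => (∑ i, |α i * y i| ^ p) ^ (1 / p)) ''
        stdSimplex ℝ (Fin K)) := by
    intro y
    refine ⟨0, ?_⟩
    rintro v ⟨γ, hγ, rfl⟩
    exact hgnonneg γ y
  set F : (Fin K → ℝ) → ℝ := fun y => sInf ((fun α : Fin K → ℝ =>
        (∑ i, |α i * y i| ^ p) ^ (1 / p)) '' stdSimplex ℝ (Fin K)) with hFdef
  have hFle : ∀ (y γ : Fin K → ℝ), γ ∈ stdSimplex ℝ (Fin K) → F y ≤ g γ y := by
    intro y γ hγ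
    exact csInf_le (hbdd y) ⟨γ, hγ, rfl⟩
  have hFnonneg : ∀ y, 0 ≤ F y := by
    intro y
    apply le_csInf (himgne y)
    rintro v ⟨γ, hγ, rfl⟩
    exact hgnonneg γ y
  -- if a coordinate vanishes, F = 0
  have hFzero : ∀ y : Fin K → ℝ, (∃ j, y j = 0) → F y = 0 := by
    rintro y ⟨j, hj⟩
    refine le_antisymm ?_ (hFnonneg y)
    have h := hFle y (Pi.single j 1) (single_mem_stdSimplex ℝ j)
    have : g (Pi.single j 1) y = 0 := by
      have hsum : (∑ i, |(Pi.single j 1 : Fin K → ℝ) i * y i| ^ p) = 0 := by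
        apply Finset.sum_eq_zero
        intro i _
        by_cases hij : i = j
        · subst hij
          simp [hj, Real.zero_rpow hp0']
        · simp [Pi.single_apply, hij, Real.zero_rpow hp0']
      rw [hgdef]
      simp only [hsum]
      exact Real.zero_rpow (by positivity)
    linarith [h, this.symm ▸ h]
  -- monotonicity of g in y (for nonneg data)
  have hmono : ∀ (γ u v : Fin K → ℝ), (∀ i, 0 ≤ γ i) → (∀ i, 0 ≤ u i) →
      (∀ i, u i ≤ v i) → g γ u ≤ g γ v := by
    intro γ u v hγ hu huv
    apply Real.rpow_le_rpow (Finset.sum_nonneg fun i _ => Real.rpow_nonneg (abs_nonneg _) _)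
      (Finset.sum_le_sum fun i _ => ?_) (by positivity)
    apply Real.rpow_le_rpow (abs_nonneg _) ?_ hp0.le
    rw [abs_of_nonneg (mul_nonneg (hγ i) (hu i)), abs_of_nonneg
      (mul_nonneg (hγ i) ((hu i).trans (huv i)))]
    exact mul_le_mul_of_nonneg_left (huv i) (hγ i)
  constructor
  · -- convexity of the box
    intro x hx z hz a b ha hb hab
    intro i
    have hxi := hx i; have hzi := hz i
    simp only [Set.mem_Icc] at hxi hzi ⊢
    simp only [Pi.add_apply, Pi.smul_apply, smul_eq_mul]
    constructor
    · exact add_nonneg (mul_nonneg ha hxi.1) (mul_nonneg hb hzi.1)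
    · nlinarith [hxi.1, hxi.2, hzi.1, hzi.2]
  · intro x hx z hz a b ha hb hab
    simp only [smul_eq_mul]
    apply le_csInf (himgne _)
    rintro v ⟨γ, hγ, rfl⟩
    have hγ0 : ∀ i, 0 ≤ γ i := hγ.1
    have hγ1 : ∑ i, γ i = 1 := hγ.2
    -- the combined point, coordinatewise
    have hwcoord : ∀ i, (a • x + b • z) i = a * x i + b * z i := by
      intro i; simp [smul_eq_mul]
    have hx0 : ∀ i, 0 ≤ x i := fun i => (hx i).1
    have hz0 : ∀ i, 0 ≤ z i := fun i => (hz i).1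
    -- goal : a * F x + b * F z ≤ g γ (a•x+b•z)
    show a * F x + b * F z ≤ g γ (a • x + b • z)
    -- reduce degenerate/zero cases using monotonicity
    have key_half : ∀ (c : ℝ) (u : Fin K → ℝ), 0 ≤ c → (∀ i, 0 ≤ u i) →
        (∀ i, c * u i ≤ (a • x + b • z) i) → c * F u ≤ g γ (a • x + b • z) := by
      intro c u hc hu hle
      calc c * F u ≤ c * g γ u := mul_le_mul_of_nonneg_left (hFle u γ hγ) hc
        _ = g γ (c • u) := by
            rw [hgdef]
            simp only
            rw [← hscale c hc (fun i => γ i * u i)]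
            congr 1
            apply Finset.sum_congr rfl
            intro i _
            congr 2
            simp [smul_eq_mul]; ring
        _ ≤ g γ (a • x + b • z) := by
            apply hmono γ _ _ hγ0 (fun i => by simpa [smul_eq_mul] using mul_nonneg hc (hu i))
            intro i
            simpa [smul_eq_mul] using hle i
    rcases eq_or_lt_of_le ha with rfl | ha'
    · rw [zero_mul, zero_add]
      apply key_half b z hb hz0
      intro i
      rw [hwcoord i]
      nlinarith [hx0 i]
    rcases eq_or_lt_of_le hb with rfl | hb'
    · rw [zero_mul, add_zero]
      apply key_half a x ha hx0
      intro i
      rw [hwcoord i]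
      nlinarith [hz0 i]
    by_cases hxz : ∃ j, x j = 0
    · rw [hFzero x hxz, mul_zero, zero_add]
      apply key_half b z hb hz0
      intro i
      rw [hwcoord i]
      nlinarith [mul_nonneg ha (hx0 i)]
    by_cases hzz : ∃ j, z j = 0
    · rw [hFzero z hzz, mul_zero, add_zero]
      apply key_half a x ha hx0
      intro i
      rw [hwcoord i]
      nlinarith [mul_nonneg hb (hz0 i)]
    -- all coordinates positive, a b > 0
    push_neg at hxz hzz
    have hxpos : ∀ i, 0 < x i := fun i => (hx0 i).lt_of_ne' (hxz i)
    have hzpos : ∀ i, 0 < z i := fun i => (hz0 i).lt_of_ne' (hzz i)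
    have hγz : ∀ j, (0:ℝ) ≤ γ j * z j / x j := fun j =>
      div_nonneg (mul_nonneg (hγ0 j) (hz0 j)) (hx0 j)
    have hγx : ∀ j, (0:ℝ) ≤ γ j * x j / z j := fun j =>
      div_nonneg (mul_nonneg (hγ0 j) (hx0 j)) (hz0 j)
    set w : Fin K → ℝ := fun i => a * x i + b * z i with hwdef
    have hwpos : ∀ i, 0 < w i := fun i =>
      add_pos (mul_pos ha' (hxpos i)) (mul_pos hb' (hzpos i))
    set A : ℝ := ∑ j, γ j * z j / x j with hA
    set B : ℝ := ∑ j, γ j * x j / z j with hB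
    have hA0 : 0 ≤ A := Finset.sum_nonneg fun j _ => hγz j
    have hB0 : 0 ≤ B := Finset.sum_nonneg fun j _ => hγx j
    -- Cauchy-Schwarz : 1 ≤ A * B
    have hAB : 1 ≤ A * B := by
      have hcs := Finset.sum_mul_sq_le_sq_mul_sq Finset.univ
        (fun j => Real.sqrt (γ j * z j / x j))
        (fun j => Real.sqrt (γ j * x j / z j))
      have h1 : ∀ j : Fin K, Real.sqrt (γ j * z j / x j) * Real.sqrt (γ j * x j / z j)
          = γ j := by
        intro j
        rw [← Real.sqrt_mul (hγz j)]
        have : γ j * z j / x j * (γ j * x j / z j) = γ j ^ 2 := by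
          have hxj := hxz j; have hzj := hzz j
          field_simp
        rw [this, Real.sqrt_sq (hγ0 j)]
      have h2 : ∀ j : Fin K, Real.sqrt (γ j * z j / x j) ^ 2 = γ j * z j / x j := by
        intro j
        exact Real.sq_sqrt (hγz j)
      have h3 : ∀ j : Fin K, Real.sqrt (γ j * x j / z j) ^ 2 = γ j * x j / z j := by
        intro j
        exact Real.sq_sqrt (hγx j)
      simp_rw [h1, h2, h3] at hcs
      rw [hγ1] at hcs
      simpa using hcs
    set Nx : ℝ := ∑ j, γ j * w j / x j with hNx
    set Nz : ℝ := ∑ j, γ j * w j / z j with hNz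
    have hterm : ∀ j : Fin K, γ j * w j / x j = a * γ j + b * (γ j * z j / x j) := by
      intro j
      have hxj : x j ≠ 0 := (hxpos j).ne'
      rw [hwdef]
      field_simp
    have hNxval : Nx = a + b * A := by
      rw [hNx, hA]
      calc (∑ j, γ j * w j / x j)
          = ∑ j, (a * γ j + b * (γ j * z j / x j)) :=
            Finset.sum_congr rfl fun j _ => hterm j
        _ = a * ∑ j, γ j + b * ∑ j, γ j * z j / x j := by
            rw [Finset.sum_add_distrib, Finset.mul_sum, Finset.mul_sum]
        _ = a + b * ∑ j, γ j * z j / x j := by rw [hγ1, mul_one]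
    have hterm' : ∀ j : Fin K, γ j * w j / z j = b * γ j + a * (γ j * x j / z j) := by
      intro j
      have hzj : z j ≠ 0 := (hzpos j).ne'
      rw [hwdef]
      field_simp
      ring
    have hNzval : Nz = b + a * B := by
      rw [hNz, hB]
      calc (∑ j, γ j * w j / z j)
          = ∑ j, (b * γ j + a * (γ j * x j / z j)) :=
            Finset.sum_congr rfl fun j _ => hterm' j
        _ = b * ∑ j, γ j + a * ∑ j, γ j * x j / z j := by
            rw [Finset.sum_add_distrib, Finset.mul_sum, Finset.mul_sum]
        _ = b + a * ∑ j, γ j * x j / z j := by rw [hγ1, mul_one]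
    have hNxpos : 0 < Nx := by rw [hNxval]; nlinarith
    have hNzpos : 0 < Nz := by rw [hNzval]; nlinarith
    have hfrac : a / Nx + b / Nz ≤ 1 := by
      rw [div_add_div _ _ hNxpos.ne' hNzpos.ne', div_le_one (mul_pos hNxpos hNzpos)]
      rw [hNxval, hNzval]
      nlinarith [mul_pos ha' hb', hAB]
    -- candidate weights
    set αx : Fin K → ℝ := fun j => γ j * w j / (x j * Nx) with hαx
    set αz : Fin K → ℝ := fun j => γ j * w j / (z j * Nz) with hαz
    have hαxmem : αx ∈ stdSimplex ℝ (Fin K) := by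
      constructor
      · intro j
        exact div_nonneg (mul_nonneg (hγ0 j) (hwpos j).le) (mul_nonneg (hx0 j) hNxpos.le)
      · calc (∑ j, αx j) = ∑ j, (γ j * w j / x j) / Nx :=
            Finset.sum_congr rfl fun j _ => by rw [hαx]; rw [div_div]
          _ = Nx / Nx := by rw [← Finset.sum_div, hNx]
          _ = 1 := div_self hNxpos.ne'
    have hαzmem : αz ∈ stdSimplex ℝ (Fin K) := by
      constructor
      · intro j
        exact div_nonneg (mul_nonneg (hγ0 j) (hwpos j).le) (mul_nonneg (hz0 j) hNzpos.le)
      · calc (∑ j, αz j) = ∑ j, (γ j * w j / z j) / Nz :=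
            Finset.sum_congr rfl fun j _ => by rw [hαz]; rw [div_div]
          _ = Nz / Nz := by rw [← Finset.sum_div, hNz]
          _ = 1 := div_self hNzpos.ne'
    have hgx : g αx x = Nx⁻¹ * g γ w := by
      rw [hgdef]
      simp only
      rw [← hscale Nx⁻¹ (inv_nonneg.mpr hNxpos.le) (fun j => γ j * w j)]
      congr 1
      apply Finset.sum_congr rfl
      intro j _
      congr 2
      rw [hαx]
      have hxj : x j ≠ 0 := (hxpos j).ne'
      field_simp
    have hgz : g αz z = Nz⁻¹ * g γ w := by
      rw [hgdef]
      simp only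
      rw [← hscale Nz⁻¹ (inv_nonneg.mpr hNzpos.le) (fun j => γ j * w j)]
      congr 1
      apply Finset.sum_congr rfl
      intro j _
      congr 2
      rw [hαz]
      have hzj : z j ≠ 0 := (hzpos j).ne'
      field_simp
    have hFxb : F x ≤ Nx⁻¹ * g γ w := (hFle x αx hαxmem).trans_eq hgx
    have hFzb : F z ≤ Nz⁻¹ * g γ w := (hFle z αz hαzmem).trans_eq hgz
    have hV0 : 0 ≤ g γ w := hgnonneg γ w
    have hxw : (a • x + b • z) = w := by
      funext i
      rw [hwcoord i, hwdef]
    rw [congrArg (g γ) hxw]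
    calc a * F x + b * F z
        ≤ a * (Nx⁻¹ * g γ w) + b * (Nz⁻¹ * g γ w) :=
          add_le_add (mul_le_mul_of_nonneg_left hFxb ha)
            (mul_le_mul_of_nonneg_left hFzb hb)
      _ = (a / Nx + b / Nz) * g γ w := by ring
      _ ≤ 1 * g γ w := mul_le_mul_of_nonneg_right hfrac hV0
      _ = g γ w := one_mul _
end

section
/- Suppose an algorithm for the vector-payoff game guarantees that the average payoff vector r̄_T = (1/T) ∑_{t=1}^T (α_t ⊙ l_t, l_t) satisfies min_{(x,y) ∈ S} (‖r̄_T,1 − x‖ + ‖r̄_T,2 − y‖) ≤ γ(T), where S = {(x,y) ∈ [0,1]^K × [0,1]^K : ‖x‖ ≤ C*(y)}. Then the load-balancing regret satisfies ‖∑_{t=1}^T α_t ⊙ l_t‖ − C*(∑_{t=1}^T l_t) ≤ T·γ(T). -/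
/-- If the average payoff vector
`r̄_T = (1/T) ∑_t (α_t ⊙ l_t, l_t)` is within distance `γ(T)` (in the combined
norm `‖x‖ + ‖y‖`) of the target set
`S = {(x,y) ∈ [0,1]^K × [0,1]^K : N x ≤ C*(y)}`, then the load-balancing regret
satisfies `N (∑_t α_t ⊙ l_t) − C*(∑_t l_t) ≤ T·γ(T)`. -/
theorem stmt_7 (K : ℕ) (N : (Fin K → ℝ) → ℝ)
    (hzero : ∀ x, N x = 0 ↔ x = 0)
    (hhom : ∀ (c : ℝ) (x), N (c • x) = |c| * N x)
    (htri : ∀ x y, N (x + y) ≤ N x + N y)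
    (hmono : ∀ x y : Fin K → ℝ, (∀ i, |x i| ≤ |y i|) → N x ≤ N y)
    (Cstar : (Fin K → ℝ) → ℝ)
    (hC : ∀ y, IsLeast ((fun α : Fin K → ℝ => N (fun i => α i * y i)) ''
            stdSimplex ℝ (Fin K)) (Cstar y))
    (hconc : ConcaveOn ℝ {y : Fin K → ℝ | ∀ i, y i ∈ Set.Icc (0:ℝ) 1} Cstar)
    (hposhom : ∀ (c : ℝ), 0 ≤ c → ∀ y, Cstar (c • y) = c * Cstar y)
    (T : ℕ) (hT : 0 < T)
    (α : Fin T → Fin K → ℝ) (l : Fin T → Fin K → ℝ)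
    (hα : ∀ t, α t ∈ stdSimplex ℝ (Fin K))
    (hl : ∀ t i, l t i ∈ Set.Icc (0:ℝ) 1)
    (γ : ℝ)
    (happrox : ∃ x y : Fin K → ℝ, (∀ i, x i ∈ Set.Icc (0:ℝ) 1) ∧
        (∀ i, y i ∈ Set.Icc (0:ℝ) 1) ∧ N x ≤ Cstar y ∧
        N ((1 / (T:ℝ)) • (∑ t, fun i => α t i * l t i) - x) +
          N ((1 / (T:ℝ)) • (∑ t, l t) - y) ≤ γ) :
    N (∑ t, fun i => α t i * l t i) - Cstar (∑ t, l t) ≤ (T:ℝ) * γ := by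
  obtain ⟨x, y, hx, hy, hxy, hdist⟩ := happrox
  have hTpos : (0:ℝ) < T := by exact_mod_cast hT
  set A : Fin K → ℝ := ∑ t, fun i => α t i * l t i with hA
  set L : Fin K → ℝ := ∑ t, l t with hL
  -- Lipschitz property of Cstar
  have hlip : ∀ u v : Fin K → ℝ, Cstar u ≤ Cstar v + N (u - v) := by
    intro u v
    obtain ⟨β, hβ, hβv⟩ := (hC v).1
    have hle : Cstar u ≤ N (fun i => β i * u i) :=
      (hC u).2 ⟨β, hβ, rfl⟩
    have hsplit : (fun i => β i * u i) =
        (fun i => β i * v i) + fun i => β i * (u - v) i := by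
      funext i; simp [Pi.add_apply, Pi.sub_apply]; ring
    have hβ1 : ∀ i, |β i| ≤ 1 := by
      intro i
      have h0 := hβ.1 i
      have hsum := hβ.2
      have : β i ≤ 1 := by
        calc β i ≤ ∑ j, β j := Finset.single_le_sum (fun j _ => hβ.1 j) (Finset.mem_univ i)
        _ = 1 := hsum
      rw [abs_of_nonneg h0]; exact this
    have hm : N (fun i => β i * (u - v) i) ≤ N (u - v) := by
      apply hmono
      intro i
      calc |β i * (u - v) i| = |β i| * |(u - v) i| := abs_mul _ _
      _ ≤ 1 * |(u - v) i| := by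
          exact mul_le_mul_of_nonneg_right (hβ1 i) (abs_nonneg _)
      _ = |(u - v) i| := one_mul _
    calc Cstar u ≤ N (fun i => β i * u i) := hle
    _ ≤ N (fun i => β i * v i) + N (fun i => β i * (u - v) i) := by
        rw [hsplit]; exact htri _ _
    _ ≤ Cstar v + N (u - v) := by
        have hβv' : N (fun i => β i * v i) = Cstar v := hβv
        linarith
  -- Cstar L = T * Cstar (L/T)
  have hCL : Cstar L = (T:ℝ) * Cstar ((1 / (T:ℝ)) • L) := by
    rw [← hposhom (T:ℝ) hTpos.le]
    congr 1
    rw [smul_smul]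
    field_simp
    rw [one_smul]
  -- N A = T * N (A/T)
  have hNA : N A = (T:ℝ) * N ((1 / (T:ℝ)) • A) := by
    rw [hhom, abs_of_nonneg (by positivity)]
    field_simp
  have h1 : N ((1 / (T:ℝ)) • A) ≤ N ((1 / (T:ℝ)) • A - x) + N x := by
    have h := htri ((1 / (T:ℝ)) • A - x) x
    rwa [sub_add_cancel] at h
  have h2 : Cstar y ≤ Cstar ((1 / (T:ℝ)) • L) + N ((1 / (T:ℝ)) • L - y) := by
    have := hlip y ((1 / (T:ℝ)) • L)
    have hneg : N (y - (1 / (T:ℝ)) • L) = N ((1 / (T:ℝ)) • L - y) := by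
      have : y - (1 / (T:ℝ)) • L = (-1 : ℝ) • ((1 / (T:ℝ)) • L - y) := by
        funext i; simp
      rw [this, hhom]; simp
    linarith
  have key : N ((1 / (T:ℝ)) • A) - Cstar ((1 / (T:ℝ)) • L) ≤ γ := by
    have : N ((1 / (T:ℝ)) • A) ≤ N ((1 / (T:ℝ)) • A - x) + Cstar y :=
      le_trans h1 (by linarith)
    linarith
  rw [hNA, hCL, ← mul_sub]
  exact mul_le_mul_of_nonneg_left key hTpos.le
end

section
/- Let x ∈ [0,1] and y ∈ (0,1]^K. Then x ≤ 1/(∑_{j=1}^K 1/y_j) if and only if there exist z_{j} ≥ 0, j = 1..K, with ∑_j z_j = x and √(4x² + (y_j − z_j)²) ≤ y_j + z_j for all j. -/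
/-- For `x ∈ [0,1]` and `y ∈ (0,1]^K`:
`x ≤ 1/(∑ j 1/y_j)` iff there exist `z_j ≥ 0` with `∑ j z_j = x` and
`√(4x² + (y_j − z_j)²) ≤ y_j + z_j` for all `j`. -/
theorem stmt_14 (K : ℕ) (hK : 0 < K) (x : ℝ) (hx : x ∈ Set.Icc (0:ℝ) 1)
    (y : Fin K → ℝ) (hy : ∀ j, y j ∈ Set.Ioc (0:ℝ) 1) :
    x ≤ 1 / (∑ j, 1 / y j) ↔
      ∃ z : Fin K → ℝ, (∀ j, 0 ≤ z j) ∧ (∑ j, z j) = x ∧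
        ∀ j, Real.sqrt (4 * x ^ 2 + (y j - z j) ^ 2) ≤ y j + z j := by
  obtain ⟨hx0, hx1⟩ := hx
  set S : ℝ := ∑ j, 1 / y j with hS
  have hSpos : 0 < S := Finset.sum_pos (fun j _ => one_div_pos.2 (hy j).1)
    (by simpa using Finset.univ_nonempty_iff.2 ⟨⟨0, hK⟩⟩)
  have key : ∀ j (z : ℝ), 0 ≤ z →
      (Real.sqrt (4 * x ^ 2 + (y j - z) ^ 2) ≤ y j + z ↔ x ^ 2 ≤ y j * z) := by
    intro j z hz
    have hyj := (hy j).1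
    rw [show y j + z = Real.sqrt ((y j + z) ^ 2) from
      (Real.sqrt_sq (by linarith)).symm,
      Real.sqrt_le_sqrt_iff (by positivity)]
    constructor <;> intro h <;> nlinarith
  constructor
  · intro h
    refine ⟨fun j => x ^ 2 / y j + (x - x ^ 2 * S) / K, fun j => ?_, ?_, fun j => ?_⟩
    · have hyj := (hy j).1
      have h1 : x ^ 2 * S ≤ x := by
        rcases eq_or_lt_of_le hx0 with h0 | h0
        · simp [← h0]
        · have := (le_div_iff₀ hSpos).1 h
          nlinarith
      have hK' : (0:ℝ) < K := by exact_mod_cast hK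
      have ha : (0:ℝ) ≤ x ^ 2 / y j := by positivity
      have hb : (0:ℝ) ≤ (x - x ^ 2 * S) / K := div_nonneg (by linarith) hK'.le
      linarith
    · have hK' : (0:ℝ) < K := by exact_mod_cast hK
      have hsum1 : ∑ j, x ^ 2 / y j = x ^ 2 * S := by
        rw [hS, Finset.mul_sum]; exact Finset.sum_congr rfl fun j _ => by ring
      rw [Finset.sum_add_distrib, hsum1, Finset.sum_const, Finset.card_univ,
        Fintype.card_fin, nsmul_eq_mul]
      field_simp
      ring
    · have hyj := (hy j).1
      have hK' : (0:ℝ) < K := by exact_mod_cast hK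
      have hznn : (0:ℝ) ≤ x ^ 2 / y j + (x - x ^ 2 * S) / K := by
        have h1 : x ^ 2 * S ≤ x := by
          rcases eq_or_lt_of_le hx0 with h0 | h0
          · simp [← h0]
          · have := (le_div_iff₀ hSpos).1 h
            nlinarith
        have ha : (0:ℝ) ≤ x ^ 2 / y j := by positivity
        have hb : (0:ℝ) ≤ (x - x ^ 2 * S) / K := div_nonneg (by linarith) hK'.le
        linarith
      rw [key j _ hznn]
      have h1 : x ^ 2 * S ≤ x := by
        rcases eq_or_lt_of_le hx0 with h0 | h0
        · simp [← h0]
        · have := (le_div_iff₀ hSpos).1 h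
          nlinarith
      have hK' : (0:ℝ) < K := by exact_mod_cast hK
      have h2 : x ^ 2 ≤ y j * (x ^ 2 / y j) := by
        rw [mul_div_cancel₀ _ (ne_of_gt hyj)]
      have h3 : 0 ≤ y j * ((x - x ^ 2 * S) / K) :=
        mul_nonneg hyj.le (div_nonneg (by linarith) hK'.le)
      nlinarith
  · rintro ⟨z, hz0, hzsum, hzle⟩
    have hzyj : ∀ j, x ^ 2 ≤ y j * z j := fun j => (key j _ (hz0 j)).1 (hzle j)
    have hmain : x ^ 2 * S ≤ x := by
      calc x ^ 2 * S = ∑ j, x ^ 2 * (1 / y j) := by rw [hS, Finset.mul_sum]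
        _ ≤ ∑ j, z j := Finset.sum_le_sum (fun j _ => by
            have hyj := (hy j).1
            rw [mul_one_div, div_le_iff₀ hyj]
            nlinarith [hzyj j])
        _ = x := hzsum
    rcases eq_or_lt_of_le hx0 with h0 | h0
    · rw [← h0]; positivity
    · rw [le_div_iff₀ hSpos]; nlinarith
end

section
/- Suppose an OCO algorithm plays w_t with ‖w_t‖_* ≤ 1 against loss functions f_t(w) = ⟨−r_t, w⟩ + h_S(w) where r_t = r(a_t, b_t), and suppose each a_t satisfies the Blackwell condition ⟨w_t, r(a_t, b)⟩ ≤ h_S(w_t) for all b ∈ B. Then the distance of the average payoff r̄_T = (1/T)∑_t r_t to the closed convex set S satisfies min_{s∈S} ‖r̄_T − s‖ ≤ (1/T)·[∑_{t=1}^T f_t(w_t) − min_{‖w‖_*≤1} ∑_{t=1}^T f_t(w)]. -/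
section helpers
variable {d : ℕ} {N : (Fin d → ℝ) → ℝ}

lemma my_N_nonneg (hzero : ∀ x, N x = 0 ↔ x = 0)
    (hhom : ∀ (c : ℝ) (x), N (c • x) = |c| * N x)
    (htri : ∀ x y, N (x + y) ≤ N x + N y) (x : Fin d → ℝ) : 0 ≤ N x := by
  have h0 : N 0 = 0 := (hzero 0).mpr rfl
  have hn : N (-x) = N x := by simpa using hhom (-1) x
  have := htri x (-x)
  simp [h0, hn] at this
  linarith

lemma my_N_sum_le (hzero : ∀ x, N x = 0 ↔ x = 0)
    (htri : ∀ x y, N (x + y) ≤ N x + N y) {ι : Type*} (s : Finset ι)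
    (f : ι → (Fin d → ℝ)) : N (∑ i ∈ s, f i) ≤ ∑ i ∈ s, N (f i) := by
  classical
  induction s using Finset.induction_on with
  | empty => simp [(hzero 0).mpr rfl]
  | @insert _ _ h ih =>
    rw [Finset.sum_insert h, Finset.sum_insert h]
    exact le_trans (htri _ _) (by linarith)

lemma my_N_cont (hzero : ∀ x, N x = 0 ↔ x = 0)
    (hhom : ∀ (c : ℝ) (x), N (c • x) = |c| * N x)
    (htri : ∀ x y, N (x + y) ≤ N x + N y) : Continuous N := by
  classical
  set C : ℝ := ∑ i, N (fun j => if i = j then 1 else 0) with hC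
  have hCnn : 0 ≤ C := Finset.sum_nonneg fun i _ => my_N_nonneg hzero hhom htri _
  have key : ∀ z : Fin d → ℝ, N z ≤ C * ‖z‖ := by
    intro z
    calc N z = N (∑ i, z i • (fun j => if i = j then 1 else 0 : Fin d → ℝ)) := by
          rw [← pi_eq_sum_univ]
      _ ≤ ∑ i, N (z i • (fun j => if i = j then 1 else 0 : Fin d → ℝ)) :=
          my_N_sum_le hzero htri _ _
      _ = ∑ i, |z i| * N (fun j => if i = j then 1 else 0 : Fin d → ℝ) := by
          simp [hhom]
      _ ≤ ∑ i, ‖z‖ * N (fun j => if i = j then 1 else 0 : Fin d → ℝ) := by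
          apply Finset.sum_le_sum
          intro i _
          have h1 : |z i| ≤ ‖z‖ := by
            simpa [Real.norm_eq_abs] using norm_le_pi_norm z i
          exact mul_le_mul_of_nonneg_right h1 (my_N_nonneg hzero hhom htri _)
      _ = C * ‖z‖ := by rw [← Finset.mul_sum, ← hC, mul_comm]
  have lip : LipschitzWith (Real.toNNReal C) N := by
    apply LipschitzWith.of_dist_le_mul
    intro x y
    rw [Real.dist_eq, dist_eq_norm, Real.coe_toNNReal C hCnn]
    have hsym : N (y - x) = N (x - y) := by
      simpa [neg_sub] using hhom (-1) (x - y)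
    have h1 : N x - N y ≤ N (x - y) := by
      have := htri (x - y) y; simp at this; linarith
    have h2 : N y - N x ≤ N (x - y) := by
      have := htri (y - x) x; simp at this; linarith [hsym]
    have := key (x - y)
    rw [abs_le]; constructor <;> linarith
  exact lip.continuous

lemma my_N_lower (hzero : ∀ x, N x = 0 ↔ x = 0)
    (hhom : ∀ (c : ℝ) (x), N (c • x) = |c| * N x)
    (htri : ∀ x y, N (x + y) ≤ N x + N y) :
    ∃ m > 0, ∀ z, m * ‖z‖ ≤ N z := by
  rcases Nat.eq_zero_or_pos d with hd | hd
  · subst hd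
    refine ⟨1, one_pos, fun z => ?_⟩
    have hz : z = 0 := funext fun i => i.elim0
    subst hz
    rw [(hzero 0).mpr rfl, norm_zero, mul_zero]
  · haveI : Nonempty (Fin d) := ⟨⟨0, hd⟩⟩
    have hsph : (Metric.sphere (0 : Fin d → ℝ) 1).Nonempty := by
      refine ⟨fun _ => 1, ?_⟩
      rw [mem_sphere_zero_iff_norm, pi_norm_const]
      simp
    obtain ⟨x0, hx0, hmin⟩ := (isCompact_sphere (0 : Fin d → ℝ) 1).exists_isMinOn hsph
      (my_N_cont hzero hhom htri).continuousOn
    have hx0ne : x0 ≠ 0 := by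
      intro h
      rw [mem_sphere_zero_iff_norm, h] at hx0
      simp at hx0
    refine ⟨N x0, ?_, ?_⟩
    · rcases lt_or_eq_of_le (my_N_nonneg hzero hhom htri x0) with h | h
      · exact h
      · exact absurd ((hzero x0).mp h.symm) hx0ne
    · intro z
      rcases eq_or_ne z 0 with rfl | hz
      · simp [(hzero 0).mpr rfl]
      · have hnz : (0:ℝ) < ‖z‖ := norm_pos_iff.mpr hz
        have hmem : ‖z‖⁻¹ • z ∈ Metric.sphere (0 : Fin d → ℝ) 1 := by
          rw [mem_sphere_zero_iff_norm]
          exact norm_smul_inv_norm hz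
        have h1 : N x0 ≤ N (‖z‖⁻¹ • z) := hmin hmem
        have h2 : N (‖z‖⁻¹ • z) = ‖z‖⁻¹ * N z := by
          rw [hhom, abs_inv, abs_norm]
        calc N x0 * ‖z‖ ≤ (‖z‖⁻¹ * N z) * ‖z‖ :=
              mul_le_mul_of_nonneg_right (h2 ▸ h1) hnz.le
          _ = N z := by field_simp
end helpers

set_option maxHeartbeats 1000000 in
/-- If an OCO algorithm plays `w_t` in the dual unit ball against
losses `f_t(w) = ⟨−r_t, w⟩ + h_S(w)` with `r_t = r(a_t,b_t)`, and each `a_t`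
satisfies the Blackwell condition `⟨w_t, r(a_t,b)⟩ ≤ h_S(w_t)` for all `b`,
then the distance of the average payoff to `S` is at most `(1/T)` times the
OCO regret. -/
theorem stmt_16 (d : ℕ) (N : (Fin d → ℝ) → ℝ)
    (hzero : ∀ x, N x = 0 ↔ x = 0)
    (hhom : ∀ (c : ℝ) (x), N (c • x) = |c| * N x)
    (htri : ∀ x y, N (x + y) ≤ N x + N y)
    -- dual norm
    (Nd : (Fin d → ℝ) → ℝ)
    (hNd : ∀ v, Nd v = sSup {u : ℝ | ∃ z : Fin d → ℝ, N z ≤ 1 ∧ u = ∑ i, v i * z i})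
    -- target set and its support function
    (S : Set (Fin d → ℝ)) (hSne : S.Nonempty) (hScomp : IsCompact S)
    (hSconv : Convex ℝ S)
    (hS : (Fin d → ℝ) → ℝ)
    (hhS : ∀ v, hS v = sSup ((fun s => ∑ i, s i * v i) '' S))
    -- the game
    {A B : Type} (r : A → B → (Fin d → ℝ))
    (T : ℕ) (hT : 0 < T) (a : Fin T → A) (b : Fin T → B)
    (w : Fin T → Fin d → ℝ) (hwball : ∀ t, Nd (w t) ≤ 1)
    (hBlackwell : ∀ t, ∀ bb : B, (∑ i, w t i * r (a t) bb i) ≤ hS (w t)) :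
    sInf ((fun s => N ((1 / (T:ℝ)) • (∑ t, r (a t) (b t)) - s)) '' S) ≤
      (1 / (T:ℝ)) *
        ((∑ t, ((∑ i, (-(r (a t) (b t) i)) * w t i) + hS (w t))) -
          sInf ((fun v => ∑ t, ((∑ i, (-(r (a t) (b t) i)) * v i) + hS v)) ''
            {v : Fin d → ℝ | Nd v ≤ 1})) := by
  classical
  have hTpos : (0:ℝ) < T := by exact_mod_cast hT
  have hN0 : N 0 = 0 := (hzero 0).mpr rfl
  have hNnn : ∀ x, 0 ≤ N x := my_N_nonneg hzero hhom htri
  obtain ⟨m, hm, hml⟩ := my_N_lower hzero hhom htri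
  obtain ⟨s0, hs0⟩ := hSne
  set e : Fin d → (Fin d → ℝ) := fun i j => if i = j then 1 else 0 with he
  set rb : Fin d → ℝ := (1 / (T:ℝ)) • (∑ t, r (a t) (b t)) with hrbdef
  -- hS facts
  have hSimgne : ∀ v : Fin d → ℝ, ((fun s => ∑ i, s i * v i) '' S).Nonempty :=
    fun v => ⟨_, ⟨s0, hs0, rfl⟩⟩
  have hSbdd : ∀ v : Fin d → ℝ, BddAbove ((fun s => ∑ i, s i * v i) '' S) := by
    intro v
    refine (hScomp.image ?_).bddAbove
    exact continuous_finset_sum _ fun i _ => (continuous_apply i).mul continuous_const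
  have hhS_ge : ∀ (v : Fin d → ℝ) (s), s ∈ S → ∑ i, s i * v i ≤ hS v := by
    intro v s hs
    rw [hhS]
    exact le_csSup (hSbdd v) ⟨s, hs, rfl⟩
  have hhS_le : ∀ (v : Fin d → ℝ) (c : ℝ), (∀ s ∈ S, ∑ i, s i * v i ≤ c) → hS v ≤ c := by
    intro v c h
    rw [hhS]
    exact csSup_le (hSimgne v) (by rintro u ⟨s, hs, rfl⟩; exact h s hs)
  have hS0 : hS 0 = 0 := by
    have h1 : hS 0 ≤ 0 := hhS_le 0 0 (by intro s _; simp)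
    have h2 : 0 ≤ hS 0 := by have := hhS_ge 0 s0 hs0; simpa using this
    linarith
  -- Nd facts
  have hAbdd : ∀ v : Fin d → ℝ,
      BddAbove {u : ℝ | ∃ z : Fin d → ℝ, N z ≤ 1 ∧ u = ∑ i, v i * z i} := by
    intro v
    refine ⟨(∑ i, |v i|) * m⁻¹, ?_⟩
    rintro u ⟨z, hz, rfl⟩
    have hzb : ‖z‖ ≤ m⁻¹ := by
      rw [← one_div, le_div_iff₀ hm]
      calc ‖z‖ * m = m * ‖z‖ := mul_comm _ _
        _ ≤ N z := hml z
        _ ≤ 1 := hz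
    calc ∑ i, v i * z i ≤ ∑ i, |v i| * m⁻¹ := by
          apply Finset.sum_le_sum
          intro i _
          calc v i * z i ≤ |v i * z i| := le_abs_self _
            _ = |v i| * |z i| := abs_mul _ _
            _ ≤ |v i| * m⁻¹ := by
                refine mul_le_mul_of_nonneg_left ?_ (abs_nonneg _)
                exact le_trans (by simpa [Real.norm_eq_abs] using norm_le_pi_norm z i) hzb
      _ = (∑ i, |v i|) * m⁻¹ := (Finset.sum_mul _ _ _).symm
  have hAne : ∀ v : Fin d → ℝ,
      (0:ℝ) ∈ {u : ℝ | ∃ z : Fin d → ℝ, N z ≤ 1 ∧ u = ∑ i, v i * z i} := by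
    intro v
    exact ⟨0, by simp [hN0], by simp⟩
  have hNd_ge : ∀ (v z : Fin d → ℝ), N z ≤ 1 → ∑ i, v i * z i ≤ Nd v := by
    intro v z hz
    rw [hNd]
    exact le_csSup (hAbdd v) ⟨z, hz, rfl⟩
  have hNd_le : ∀ (v : Fin d → ℝ) (c : ℝ),
      (∀ z : Fin d → ℝ, N z ≤ 1 → ∑ i, v i * z i ≤ c) → Nd v ≤ c := by
    intro v c h
    rw [hNd]
    exact csSup_le ⟨0, hAne v⟩ (by rintro u ⟨z, hz, rfl⟩; exact h z hz)
  have hNd0 : Nd (0 : Fin d → ℝ) ≤ 1 := hNd_le 0 1 (by intro z hz; simp)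
  -- coordinates of dual-ball elements are bounded
  have hepos : ∀ i, 0 < N (e i) := by
    intro i
    rcases lt_or_eq_of_le (hNnn (e i)) with h | h
    · exact h
    · exfalso
      have h1 := (hzero (e i)).mp h.symm
      have h2 : e i i = 0 := by rw [h1]; rfl
      simp [he] at h2
  have hcoord : ∀ v : Fin d → ℝ, Nd v ≤ 1 → ∀ i, |v i| ≤ N (e i) := by
    intro v hv i
    have hz1 : N ((N (e i))⁻¹ • e i) ≤ 1 := by
      rw [hhom, abs_inv, abs_of_pos (hepos i), inv_mul_cancel₀ (hepos i).ne']
    have hz2 : N (-((N (e i))⁻¹ • e i)) ≤ 1 := by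
      have : -((N (e i))⁻¹ • e i) = (-1 : ℝ) • ((N (e i))⁻¹ • e i) := by
        funext j; simp
      rw [this, hhom]
      simpa using hz1
    have key : ∀ z, N z ≤ 1 → ∑ j, v j * z j ≤ 1 := fun z hz =>
      le_trans (hNd_ge v z hz) hv
    have hsum : ∑ j, v j * ((N (e i))⁻¹ • e i) j = (N (e i))⁻¹ * v i := by
      simp only [Pi.smul_apply, he, smul_eq_mul, mul_ite, mul_one, mul_zero]
      rw [Finset.sum_ite_eq Finset.univ i (fun j => v j * (N (e i))⁻¹)]
      simp [mul_comm]
      exact Or.inl rfl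
    have h1 := key _ hz1
    have h2 := key _ hz2
    rw [hsum] at h1
    have hsum2 : ∑ j, v j * (-((N (e i))⁻¹ • e i)) j = -((N (e i))⁻¹ * v i) := by
      rw [← hsum, ← Finset.sum_neg_distrib]
      apply Finset.sum_congr rfl
      intro j _
      simp
    rw [hsum2] at h2
    rw [abs_le]
    have hNe := hepos i
    have ha : v i ≤ N (e i) := by
      have h3 := mul_le_mul_of_nonneg_left h1 hNe.le
      rw [← mul_assoc, mul_inv_cancel₀ hNe.ne', one_mul, mul_one] at h3
      exact h3
    have hb2 : -(N (e i)) ≤ v i := by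
      have h3 := mul_le_mul_of_nonneg_left h2 hNe.le
      rw [mul_neg, ← mul_assoc, mul_inv_cancel₀ hNe.ne', one_mul, mul_one] at h3
      linarith
    exact ⟨hb2, ha⟩
  -- the cumulative loss function and its lower bound on the dual ball
  set G : (Fin d → ℝ) → ℝ :=
    fun v => ∑ t, ((∑ i, (-(r (a t) (b t) i)) * v i) + hS v) with hGdef
  have hGlb : ∀ v : Fin d → ℝ, Nd v ≤ 1 →
      -(∑ t, ∑ i, |s0 i - r (a t) (b t) i| * N (e i)) ≤ G v := by
    intro v hv
    have hterm : ∀ t, -(∑ i, |s0 i - r (a t) (b t) i| * N (e i)) ≤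
        (∑ i, (-(r (a t) (b t) i)) * v i) + hS v := by
      intro t
      have h1 : ∑ i, s0 i * v i ≤ hS v := hhS_ge v s0 hs0
      have h2 : ∀ i, -(|s0 i - r (a t) (b t) i| * N (e i)) ≤
          (s0 i - r (a t) (b t) i) * v i := by
        intro i
        have hc := hcoord v hv i
        calc -(|s0 i - r (a t) (b t) i| * N (e i))
            ≤ -(|s0 i - r (a t) (b t) i| * |v i|) := by
              apply neg_le_neg
              exact mul_le_mul_of_nonneg_left hc (abs_nonneg _)
          _ = -|(s0 i - r (a t) (b t) i) * v i| := by rw [abs_mul]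
          _ ≤ (s0 i - r (a t) (b t) i) * v i := neg_abs_le _
      calc -(∑ i, |s0 i - r (a t) (b t) i| * N (e i))
          = ∑ i, -(|s0 i - r (a t) (b t) i| * N (e i)) := by
            rw [Finset.sum_neg_distrib]
        _ ≤ ∑ i, (s0 i - r (a t) (b t) i) * v i := Finset.sum_le_sum fun i _ => h2 i
        _ = (∑ i, (-(r (a t) (b t) i)) * v i) + ∑ i, s0 i * v i := by
            rw [← Finset.sum_add_distrib]
            apply Finset.sum_congr rfl
            intro i _
            ring
        _ ≤ _ := by linarith
    calc -(∑ t, ∑ i, |s0 i - r (a t) (b t) i| * N (e i))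
        = ∑ t, -(∑ i, |s0 i - r (a t) (b t) i| * N (e i)) := by
          rw [Finset.sum_neg_distrib]
      _ ≤ G v := Finset.sum_le_sum fun t _ => hterm t
  have hGbdd : BddBelow (G '' {v : Fin d → ℝ | Nd v ≤ 1}) := by
    refine ⟨-(∑ t, ∑ i, |s0 i - r (a t) (b t) i| * N (e i)), ?_⟩
    rintro u ⟨v, hv, rfl⟩
    exact hGlb v hv
  -- the distance
  set D : ℝ := sInf ((fun s => N (rb - s)) '' S) with hDdef
  have hDbb : BddBelow ((fun s => N (rb - s)) '' S) := by
    refine ⟨0, ?_⟩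
    rintro u ⟨s, _, rfl⟩
    exact hNnn _
  have hDnn : 0 ≤ D := le_csInf ⟨_, ⟨s0, hs0, rfl⟩⟩ (by rintro u ⟨s, _, rfl⟩; exact hNnn _)
  have hDle : ∀ s ∈ S, D ≤ N (rb - s) := fun s hs => csInf_le hDbb ⟨s, hs, rfl⟩
  -- key inequality : the optimal cumulative loss is at most -T*D
  have hI : sInf (G '' {v : Fin d → ℝ | Nd v ≤ 1}) ≤ -(T:ℝ) * D := by
    rcases eq_or_lt_of_le hDnn with hD0 | hDpos
    · have hG0 : G 0 = 0 := by simp [hGdef, hS0]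
      have h1 : sInf (G '' {v : Fin d → ℝ | Nd v ≤ 1}) ≤ G 0 :=
        csInf_le hGbdd ⟨0, hNd0, rfl⟩
      rw [hG0] at h1
      rw [← hD0]
      simpa using h1
    · -- separation argument
      set Bo : Set (Fin d → ℝ) := {x | N (x - rb) < D} with hBo
      have hBoopen : IsOpen Bo := by
        have hcont : Continuous fun x : Fin d → ℝ => N (x - rb) :=
          (my_N_cont hzero hhom htri).comp (continuous_id.sub continuous_const)
        exact isOpen_lt hcont continuous_const
      have hBoconv : Convex ℝ Bo := by
        intro x hx y hy p q hp hq hpq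
        simp only [hBo, Set.mem_setOf_eq] at hx hy ⊢
        have hxy : p • x + q • y - rb = p • (x - rb) + q • (y - rb) := by
          funext j
          simp only [Pi.add_apply, Pi.sub_apply, Pi.smul_apply, smul_eq_mul]
          linear_combination rb j * hpq
        rw [hxy]
        have hb1 := htri (p • (x - rb)) (q • (y - rb))
        rw [hhom, hhom, abs_of_nonneg hp, abs_of_nonneg hq] at hb1
        have hD' : p * D + q * D = D := by rw [← add_mul, hpq, one_mul]
        rcases eq_or_lt_of_le hp with hp0 | hp0
        · have hq1 : q = 1 := by linarith
          rw [← hp0, hq1] at hb1 ⊢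
          simp only [zero_mul, zero_add, one_mul] at hb1
          linarith
        · have h2 := mul_lt_mul_of_pos_left hx hp0
          have h3 := mul_le_mul_of_nonneg_left hy.le hq
          linarith
      have hdisj : Disjoint Bo S := by
        rw [Set.disjoint_left]
        intro x hx hxS
        have h1 := hDle x hxS
        have h2 : N (rb - x) = N (x - rb) := by
          simpa [neg_sub] using hhom (-1) (x - rb)
        rw [h2] at h1
        simp only [hBo, Set.mem_setOf_eq] at hx
        linarith
      obtain ⟨f, c, hfB, hfS⟩ := geometric_hahn_banach_open hBoconv hBoopen hSconv hdisj
      set v : Fin d → ℝ := fun i => -(f (e i)) with hvdef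
      have hlin : ∀ z : Fin d → ℝ, ∑ i, v i * z i = -(f z) := by
        intro z
        have hz : f z = ∑ i, z i * f (e i) := by
          conv_lhs => rw [pi_eq_sum_univ z]
          rw [map_sum]
          apply Finset.sum_congr rfl
          intro i _
          rw [map_smul]
          simp [he]
        rw [hz, ← Finset.sum_neg_distrib]
        apply Finset.sum_congr rfl
        intro i _
        simp [hvdef]
        ring
      have hrbBo : rb ∈ Bo := by
        simp only [hBo, Set.mem_setOf_eq, sub_self, hN0]
        exact hDpos
      have hfrb : f rb < c := hfB rb hrbBo
      have hstep : ∀ z : Fin d → ℝ, N z ≤ 1 → D * (∑ i, v i * z i) ≤ c - f rb := by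
        intro z hz
        rw [hlin]
        by_contra hcon
        push_neg at hcon
        set X : ℝ := D * (-(f z)) with hX
        set Y : ℝ := c - f rb with hY
        have hY0 : 0 < Y := by rw [hY]; linarith
        have hX0 : 0 < X := lt_trans hY0 hcon
        set t : ℝ := (Y + X) / (2 * X) with ht
        have ht0 : 0 < t := by positivity
        have ht1 : t < 1 := by
          rw [ht, div_lt_one (by positivity)]
          linarith
        have hmem : rb - (t * D) • z ∈ Bo := by
          simp only [hBo, Set.mem_setOf_eq]
          have heq : rb - (t * D) • z - rb = (-(t * D)) • z := by
            funext j
            simp only [Pi.sub_apply, Pi.smul_apply, smul_eq_mul]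
            ring
          have htD : 0 < t * D := mul_pos ht0 hDpos
          rw [heq, hhom, abs_of_nonpos (by nlinarith)]
          have h3 : t * D * N z ≤ t * D := by
            have := mul_le_mul_of_nonneg_left hz htD.le
            linarith
          nlinarith
        have h4 := hfB _ hmem
        have h5 : f (rb - (t * D) • z) = f rb - (t * D) * f z := by
          rw [map_sub]
          congr 1
          rw [map_smul, smul_eq_mul]
        rw [h5] at h4
        have htX : t * X < Y := by rw [hX, hY]; nlinarith
        have htXeq : t * X = (Y + X) / 2 := by
          rw [ht]
          field_simp
        nlinarith
      have hKpos : 0 < Nd v := by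
        have hne : rb - s0 ≠ 0 := by
          intro h
          have h1 : rb = s0 := by
            funext j
            have := congrFun h j
            simp only [Pi.sub_apply, Pi.zero_apply] at this
            linarith
          have h2 := hDle s0 hs0
          rw [h1, sub_self, hN0] at h2
          linarith
        have hNu : 0 < N (rb - s0) :=
          lt_of_le_of_ne (hNnn _) (fun h => hne ((hzero _).mp h.symm))
        set z : Fin d → ℝ := (N (rb - s0))⁻¹ • (rb - s0) with hzdef
        have hz1 : N z ≤ 1 := by
          rw [hzdef, hhom, abs_inv, abs_of_pos hNu, inv_mul_cancel₀ hNu.ne']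
        have hge := hNd_ge v z hz1
        rw [hlin] at hge
        have hfz : f z = (N (rb - s0))⁻¹ * (f rb - f s0) := by
          rw [hzdef, map_smul, smul_eq_mul, map_sub]
        have hcs0 := hfS s0 hs0
        have hinv : (0:ℝ) < (N (rb - s0))⁻¹ := inv_pos.mpr hNu
        have : 0 < -(f z) := by
          rw [hfz]
          have : f rb - f s0 < 0 := by linarith
          nlinarith
        linarith
      set K : ℝ := Nd v with hKdef
      have hKD : D * K ≤ c - f rb := by
        have hle : K ≤ (c - f rb) / D := by
          apply hNd_le
          intro z hz
          rw [le_div_iff₀ hDpos, mul_comm]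
          exact hstep z hz
        calc D * K ≤ D * ((c - f rb) / D) :=
              mul_le_mul_of_nonneg_left hle hDpos.le
          _ = c - f rb := by field_simp
      have hSvle : hS v ≤ -c := by
        apply hhS_le
        intro s hsS
        have h1 : ∑ i, s i * v i = ∑ i, v i * s i :=
          Finset.sum_congr rfl fun i _ => mul_comm _ _
        rw [h1, hlin]
        linarith [hfS s hsS]
      have hkey : D * K ≤ (∑ i, v i * rb i) - hS v := by
        rw [hlin]
        linarith
      -- scale v into the dual ball
      set v' : Fin d → ℝ := K⁻¹ • v with hv'def
      have hKinn : (0:ℝ) ≤ K⁻¹ := inv_nonneg.mpr hKpos.le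
      have hv'ball : Nd v' ≤ 1 := by
        apply hNd_le
        intro z hz
        have h1 := hNd_ge v z hz
        have h2 : ∑ i, v' i * z i = K⁻¹ * ∑ i, v i * z i := by
          rw [Finset.mul_sum]
          apply Finset.sum_congr rfl
          intro i _
          simp [hv'def]
          ring
        rw [h2]
        calc K⁻¹ * ∑ i, v i * z i ≤ K⁻¹ * K :=
              mul_le_mul_of_nonneg_left h1 hKinn
          _ = 1 := inv_mul_cancel₀ hKpos.ne'
      -- value of G at v
      have hTne : (T:ℝ) ≠ 0 := hTpos.ne'
      have hrbi : ∀ i, (T:ℝ) * rb i = ∑ t, r (a t) (b t) i := by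
        intro i
        rw [hrbdef]
        simp only [Pi.smul_apply, smul_eq_mul, Finset.sum_apply]
        field_simp
      have hGv : G v ≤ -((T:ℝ) * (D * K)) := by
        have hsplit : G v = (∑ t, ∑ i, (-(r (a t) (b t) i)) * v i) + (T:ℝ) * hS v := by
          simp only [hGdef]
          rw [Finset.sum_add_distrib, Finset.sum_const, Finset.card_univ,
            Fintype.card_fin, nsmul_eq_mul]
        have hswap : ∑ t, ∑ i, (-(r (a t) (b t) i)) * v i
            = -((T:ℝ) * ∑ i, v i * rb i) := by
          rw [Finset.sum_comm, Finset.mul_sum, ← Finset.sum_neg_distrib]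
          apply Finset.sum_congr rfl
          intro i _
          have h6 : ∑ t, (-(r (a t) (b t) i)) * v i
              = (∑ t, -(r (a t) (b t) i)) * v i := (Finset.sum_mul _ _ _).symm
          rw [h6, Finset.sum_neg_distrib, ← hrbi i]
          ring
        have hGvval : G v = -((T:ℝ) * ((∑ i, v i * rb i) - hS v)) := by
          rw [hsplit, hswap]; ring
        rw [hGvval]
        have h7 := mul_le_mul_of_nonneg_left hkey hTpos.le
        linarith
      have hGv' : G v' ≤ K⁻¹ * G v := by
        simp only [hGdef, Finset.mul_sum]
        apply Finset.sum_le_sum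
        intro t _
        have hsc : ∑ i, (-(r (a t) (b t) i)) * v' i
            = K⁻¹ * ∑ i, (-(r (a t) (b t) i)) * v i := by
          rw [Finset.mul_sum]
          apply Finset.sum_congr rfl
          intro i _
          simp only [hv'def, Pi.smul_apply, smul_eq_mul]
          ring
        have hsv' : hS v' ≤ K⁻¹ * hS v := by
          apply hhS_le
          intro s hsS
          have h7 : ∑ i, s i * v' i = K⁻¹ * ∑ i, s i * v i := by
            rw [Finset.mul_sum]
            apply Finset.sum_congr rfl
            intro i _
            simp only [hv'def, Pi.smul_apply, smul_eq_mul]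
            ring
          rw [h7]
          exact mul_le_mul_of_nonneg_left (hhS_ge v s hsS) hKinn
        rw [hsc, mul_add]
        linarith
      have hfin : G v' ≤ -(T:ℝ) * D := by
        have h8 := le_trans hGv' (mul_le_mul_of_nonneg_left hGv hKinn)
        have h9 : K⁻¹ * -((T:ℝ) * (D * K)) = -(T:ℝ) * D := by
          field_simp
        rw [h9] at h8
        exact h8
      exact le_trans (csInf_le hGbdd ⟨v', hv'ball, rfl⟩) hfin
  -- final assembly
  have hLS : 0 ≤ ∑ t, ((∑ i, (-(r (a t) (b t) i)) * w t i) + hS (w t)) := by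
    apply Finset.sum_nonneg
    intro t _
    have hb := hBlackwell t (b t)
    have h1 : ∑ i, (-(r (a t) (b t) i)) * w t i = -(∑ i, w t i * r (a t) (b t) i) := by
      rw [← Finset.sum_neg_distrib]
      apply Finset.sum_congr rfl
      intro i _
      ring
    rw [h1]
    linarith
  calc D = (1/(T:ℝ)) * ((T:ℝ) * D) := by field_simp
    _ ≤ (1/(T:ℝ)) * ((∑ t, ((∑ i, (-(r (a t) (b t) i)) * w t i) + hS (w t)))
        - sInf (G '' {v : Fin d → ℝ | Nd v ≤ 1})) := by
        apply mul_le_mul_of_nonneg_left _ (by positivity)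
        linarith
end

section
/- For y ∈ (0,1]^K and p > 1, the minimizer of ‖α ⊙ y‖_p over α ∈ Δ(K) is α_i = y_i^{−p/(p−1)} / ∑_j y_j^{−p/(p−1)}, and the minimum value equals (∑_{i=1}^K y_i^{−p/(p−1)})^{−(p−1)/p}. -/
/-- For `y ∈ (0,1]^K` and `p > 1`, the minimizer of `‖α ⊙ y‖_p`
over the simplex is `α_i = y_i^(−p/(p−1)) / ∑_j y_j^(−p/(p−1))`, with minimum
value `(∑_i y_i^(−p/(p−1)))^(−(p−1)/p)`. -/
theorem stmt_18 (K : ℕ) (hK : 0 < K) (y : Fin K → ℝ)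
    (hy : ∀ i, y i ∈ Set.Ioc (0:ℝ) 1) (p : ℝ) (hp : 1 < p) :
    let q : ℝ := p / (p - 1)
    let αopt : Fin K → ℝ := fun i => y i ^ (-q) / ∑ j, y j ^ (-q)
    αopt ∈ stdSimplex ℝ (Fin K) ∧
      (∑ i, |αopt i * y i| ^ p) ^ (1 / p) =
        (∑ i, y i ^ (-q)) ^ (-(p - 1) / p) ∧
      ∀ α ∈ stdSimplex ℝ (Fin K),
        (∑ i, y i ^ (-q)) ^ (-(p - 1) / p) ≤ (∑ i, |α i * y i| ^ p) ^ (1 / p) := by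
  intro q αopt
  have hq : q = p / (p - 1) := rfl
  have hp0 : (0:ℝ) < p := lt_trans one_pos hp
  have hp1 : (0:ℝ) < p - 1 := by linarith
  have hyi : ∀ i, 0 < y i := fun i => (hy i).1
  have hterm : ∀ i, 0 < y i ^ (-q) := fun i => Real.rpow_pos_of_pos (hyi i) _
  haveI : Nonempty (Fin K) := ⟨⟨0, hK⟩⟩
  have hSpos : 0 < ∑ j, y j ^ (-q) :=
    Finset.sum_pos (fun i _ => hterm i) Finset.univ_nonempty
  set S : ℝ := ∑ j, y j ^ (-q) with hSdef
  have hqp : (1 - q) * p = -q := by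
    rw [hq]; field_simp; ring
  have hnd : -(p - 1) / p = -((p - 1) / p) := by ring
  have hoq : 1 / q = (p - 1) / p := by
    rw [hq, one_div, inv_div]
  -- membership in simplex
  have hmem : αopt ∈ stdSimplex ℝ (Fin K) := by
    constructor
    · intro i
      exact le_of_lt (div_pos (hterm i) hSpos)
    · rw [← Finset.sum_div]
      exact div_self (ne_of_gt hSpos)
  refine ⟨hmem, ?_, ?_⟩
  · -- value at the optimum
    have key : ∀ i, |αopt i * y i| ^ p = y i ^ (-q) / S ^ p := by
      intro i
      have h1 : αopt i * y i = y i ^ (1 - q) / S := by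
        show y i ^ (-q) / S * y i = y i ^ (1 - q) / S
        rw [div_mul_eq_mul_div]
        congr 1
        rw [show (1:ℝ) - q = -q + 1 by ring, Real.rpow_add (hyi i), Real.rpow_one]
      have hpos : 0 < y i ^ (1 - q) / S := div_pos (Real.rpow_pos_of_pos (hyi i) _) hSpos
      rw [h1, abs_of_pos hpos, Real.div_rpow (Real.rpow_pos_of_pos (hyi i) _).le hSpos.le,
        ← Real.rpow_mul (hyi i).le, hqp]
    have hsum : ∑ i, |αopt i * y i| ^ p = S ^ (1 - p) := by
      rw [Finset.sum_congr rfl (fun i _ => key i), ← Finset.sum_div, ← hSdef,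
        Real.rpow_sub hSpos, Real.rpow_one]
    rw [hsum, ← Real.rpow_mul hSpos.le]
    congr 1
    field_simp
    ring
  · intro α hα
    have hpq : p.HolderConjugate q := (Real.holderConjugate_iff_eq_conjExponent hp).mpr hq
    have H := Real.inner_le_Lp_mul_Lq (Finset.univ) (fun i => α i * y i)
      (fun i => (y i)⁻¹) hpq
    have h1 : ∑ i, (α i * y i) * (y i)⁻¹ = 1 := by
      rw [← hα.2]
      exact Finset.sum_congr rfl fun i _ => by
        rw [mul_assoc, mul_inv_cancel₀ (ne_of_gt (hyi i)), mul_one]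
    have h2 : ∑ i, |(y i)⁻¹| ^ q = S := by
      refine Finset.sum_congr rfl fun i _ => ?_
      rw [abs_of_pos (inv_pos.mpr (hyi i)), ← Real.rpow_neg_one (y i),
        ← Real.rpow_mul (hyi i).le]
      norm_num
    rw [h1, h2, hoq] at H
    have hB : 0 < S ^ ((p - 1) / p) := Real.rpow_pos_of_pos hSpos _
    rw [hnd, Real.rpow_neg hSpos.le, ← one_div, div_le_iff₀ hB]
    exact H
end
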